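/- arXiv:math/9802047 — 2 statements merged into one kernel-verified Lean document; each statement's English description precedes it below -/
import Mathlib

section
/- Define E_c, O_c ∈ ℕ[x] by (u+1)^c = E_c(u²) + u·O_c(u²). Then for all natural numbers a and b: O_{a+b} ≺ E_{a+b}, E_a O_b ≺ E_{a+b}, O_a E_b ≺ E_{a+b}, and O_a O_b ≺ O_{a+b} ≺ E_a E_b. -/
open Polynomial

/-- A real polynomial is standard if it is zero or has positive leading coefficient. -/
def Standard (A : Polynomial ℝ) : Prop := A = 0 ∨ 0 < A.leadingCoeff

/-- A real polynomial has only real zeros (or is identically zero). -/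
def RealRooted (A : Polynomial ℝ) : Prop :=
  A = 0 ∨ ∀ z : ℂ, (Polynomial.aeval z) A = 0 → z.im = 0

/-- A real polynomial has only real nonpositive zeros (or is identically zero). -/
def OnlyNonposZeros (A : Polynomial ℝ) : Prop :=
  A = 0 ∨ ∀ z : ℂ, (Polynomial.aeval z) A = 0 → z.im = 0 ∧ z.re ≤ 0

open scoped Classical in
/-- The real roots of `A`, with multiplicity, listed in increasing order. -/
noncomputable def sroots (A : Polynomial ℝ) : List ℝ := A.roots.sort (· ≤ ·)

/-- `A` interlaces `B`: `deg B = deg A + 1` and the zeros satisfy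
`θ₁ ≤ ξ₁ ≤ θ₂ ≤ ⋯ ≤ ξ_a ≤ θ_{a+1}`. -/
def Interlaces (A B : Polynomial ℝ) : Prop :=
  B.natDegree = A.natDegree + 1 ∧
    ∀ i < A.natDegree,
      (sroots B).getD i 0 ≤ (sroots A).getD i 0 ∧
        (sroots A).getD i 0 ≤ (sroots B).getD (i + 1) 0

/-- `A` alternates left of `B`: `deg A = deg B` and the zeros satisfy
`ξ₁ ≤ θ₁ ≤ ξ₂ ≤ ⋯ ≤ ξ_a ≤ θ_a`. -/
def AltLeft (A B : Polynomial ℝ) : Prop :=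
  A.natDegree = B.natDegree ∧
    (∀ i < A.natDegree, (sroots A).getD i 0 ≤ (sroots B).getD i 0) ∧
    (∀ i, i + 1 < A.natDegree → (sroots B).getD i 0 ≤ (sroots A).getD (i + 1) 0)

/-- `A ≺ B`: either `A` interlaces `B` or `A` alternates left of `B` (both polynomials
having only real zeros); by convention `0 ≺ B` and `A ≺ 0` always hold. -/
def Prec (A B : Polynomial ℝ) : Prop :=
  A = 0 ∨ B = 0 ∨ (RealRooted A ∧ RealRooted B ∧ (Interlaces A B ∨ AltLeft A B))

open Real
open scoped Classical


lemma aux_comp_sq_coeff_even (p : Polynomial ℝ) (k : ℕ) :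
    (p.comp (X ^ 2)).coeff (2 * k) = p.coeff k := by
  induction p using Polynomial.induction_on' with
  | add p q hp hq => simp [add_comp, hp, hq]
  | monomial n a =>
    rw [monomial_comp, ← pow_mul]
    have h2 : (2 * k = 2 * n) ↔ (k = n) := by omega
    simp only [coeff_C_mul, coeff_X_pow, coeff_monomial, h2]
    by_cases h : k = n <;> simp [h, eq_comm]

lemma aux_comp_sq_coeff_odd (p : Polynomial ℝ) (k : ℕ) :
    (p.comp (X ^ 2)).coeff (2 * k + 1) = 0 := by
  induction p using Polynomial.induction_on' with
  | add p q hp hq => simp [add_comp, hp, hq]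
  | monomial n a =>
    rw [monomial_comp, ← pow_mul]
    have h2 : ¬(2 * k + 1 = 2 * n) := by omega
    simp [coeff_C_mul, coeff_X_pow, h2]

section withh
variable (Ep Op : ℕ → Polynomial ℝ)
  (h : ∀ c : ℕ, (X + 1) ^ c = (Ep c).comp (X ^ 2) + X * (Op c).comp (X ^ 2))

include h

lemma aux_coeffE (c k : ℕ) : (Ep c).coeff k = (c.choose (2 * k) : ℝ) := by
  have hc := congrArg (fun p => Polynomial.coeff p (2 * k)) (h c)
  simp only [coeff_X_add_one_pow, coeff_add, aux_comp_sq_coeff_even] at hc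
  rcases Nat.eq_zero_or_pos k with rfl | hk
  · simpa using hc.symm
  · have h2 : 2 * k = (2 * (k - 1) + 1) + 1 := by omega
    rw [h2, coeff_X_mul, aux_comp_sq_coeff_odd, add_zero] at hc
    rw [← hc, h2]

lemma aux_coeffO (c k : ℕ) : (Op c).coeff k = (c.choose (2 * k + 1) : ℝ) := by
  have hc := congrArg (fun p => Polynomial.coeff p (2 * k + 1)) (h c)
  simp only [coeff_X_add_one_pow, coeff_add, aux_comp_sq_coeff_odd,
    coeff_X_mul, aux_comp_sq_coeff_even, zero_add] at hc
  exact hc.symm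

lemma aux_EpNe (c : ℕ) : Ep c ≠ 0 := by
  intro h0
  have := aux_coeffE Ep Op h c (c / 2)
  rw [h0] at this
  simp only [coeff_zero] at this
  have : c.choose (2 * (c / 2)) = 0 := by exact_mod_cast this.symm
  have h3 := Nat.choose_pos (n := c) (k := 2 * (c / 2)) (by omega)
  omega

lemma aux_natDegE (c : ℕ) : (Ep c).natDegree = c / 2 := by
  apply le_antisymm
  · rw [natDegree_le_iff_coeff_eq_zero]
    intro N hN
    rw [aux_coeffE Ep Op h]
    have : c < 2 * N := by omega
    simp [Nat.choose_eq_zero_of_lt this]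
  · apply le_natDegree_of_ne_zero
    rw [aux_coeffE Ep Op h]
    have h3 := Nat.choose_pos (n := c) (k := 2 * (c / 2)) (by omega)
    exact_mod_cast Nat.cast_ne_zero.mpr (by omega)

lemma aux_natDegO (c : ℕ) (hc : 1 ≤ c) : (Op c).natDegree = (c - 1) / 2 := by
  apply le_antisymm
  · rw [natDegree_le_iff_coeff_eq_zero]
    intro N hN
    rw [aux_coeffO Ep Op h]
    have : c < 2 * N + 1 := by omega
    simp [Nat.choose_eq_zero_of_lt this]
  · apply le_natDegree_of_ne_zero
    rw [aux_coeffO Ep Op h]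
    have h3 := Nat.choose_pos (n := c) (k := 2 * ((c-1) / 2) + 1) (by omega)
    exact_mod_cast Nat.cast_ne_zero.mpr (by omega)

lemma aux_OpNe (c : ℕ) (hc : 1 ≤ c) : Op c ≠ 0 := by
  intro h0
  have := aux_coeffO Ep Op h c ((c - 1) / 2)
  rw [h0] at this
  simp only [coeff_zero] at this
  have h2 : c.choose (2 * ((c-1) / 2) + 1) = 0 := by exact_mod_cast this.symm
  have h3 := Nat.choose_pos (n := c) (k := 2 * ((c-1) / 2) + 1) (by omega)
  omega

lemma aux_Op0 : Op 0 = 0 := by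
  ext k
  rw [aux_coeffO Ep Op h]
  simp

end withh


-- helper: aeval of a real polynomial at a real point, in ℂ
lemma aux_aeval_real (p : Polynomial ℝ) (x : ℝ) :
    (aeval (x : ℂ)) p = ((p.eval x : ℝ) : ℂ) := by
  have := Polynomial.aeval_algHom_apply (Complex.ofRealAm) x p
  simpa [Polynomial.coe_aeval_eq_eval] using this

section withh
variable (Ep Op : ℕ → Polynomial ℝ)
  (h : ∀ c : ℕ, (X + 1) ^ c = (Ep c).comp (X ^ 2) + X * (Op c).comp (X ^ 2))
include h

lemma aux_eval (c : ℕ) (φ : ℝ) (h1 : 0 < φ) (h2 : φ < π / 2) :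
    Real.cos φ ^ c * (Ep c).eval (-(Real.tan φ ^ 2)) = Real.cos (c * φ) ∧
    Real.cos φ ^ c * (Real.tan φ * (Op c).eval (-(Real.tan φ ^ 2))) = Real.sin (c * φ) := by
  have hcos : 0 < Real.cos φ := Real.cos_pos_of_mem_Ioo ⟨by linarith, h2⟩
  set t := Real.tan φ with ht
  -- complex identity from h
  have hc := congrArg (aeval (Complex.I * (t : ℂ))) (h c)
  have hsq : (Complex.I * (t : ℂ)) ^ 2 = ((-(t ^ 2) : ℝ) : ℂ) := by
    push_cast
    rw [mul_pow, Complex.I_sq]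
    ring
  simp only [map_add, map_mul, map_pow, aeval_X, aeval_one, map_one, Polynomial.aeval_comp] at hc
  rw [hsq, aux_aeval_real, aux_aeval_real] at hc
  -- hc : (I*t + 1)^c = E + I*t*O  (as complexes)
  have hbase : (Real.cos φ : ℂ) * (Complex.I * (t : ℂ) + 1) = Complex.exp (φ * Complex.I) := by
    rw [Complex.exp_mul_I, ← Complex.ofReal_cos, ← Complex.ofReal_sin]
    have : Real.cos φ * t = Real.sin φ := by
      rw [ht, Real.tan_eq_sin_div_cos]
      field_simp
    rw [mul_add, mul_one]
    rw [mul_left_comm]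
    rw [← Complex.ofReal_mul, this]
    ring
  have hpow : (Real.cos φ : ℂ) ^ c * (Complex.I * (t : ℂ) + 1) ^ c
      = ((Real.cos (c * φ) : ℝ) : ℂ) + ((Real.sin (c * φ) : ℝ) : ℂ) * Complex.I := by
    rw [← mul_pow, hbase, ← Complex.exp_nat_mul]
    have : (c : ℂ) * ((φ : ℂ) * Complex.I) = ((c * φ : ℝ) : ℂ) * Complex.I := by
      push_cast; ring
    rw [this, Complex.exp_mul_I, ← Complex.ofReal_cos, ← Complex.ofReal_sin]
  rw [hc] at hpow
  set E := (Ep c).eval (-(t ^ 2))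
  set O := (Op c).eval (-(t ^ 2))
  have key : ∀ x y z w : ℝ, ((x : ℂ) + (y : ℂ) * Complex.I = (z : ℂ) + (w : ℂ) * Complex.I) → x = z ∧ y = w := by
    intro x y z w hxy
    rw [Complex.ext_iff] at hxy
    simpa using hxy
  have hpow' : ((Real.cos φ ^ c * E : ℝ) : ℂ) + ((Real.cos φ ^ c * (t * O) : ℝ) : ℂ) * Complex.I
      = ((Real.cos (c * φ) : ℝ) : ℂ) + ((Real.sin (c * φ) : ℝ) : ℂ) * Complex.I := by
    rw [← hpow]; push_cast; ring
  have := key _ _ _ _ hpow'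
  exact ⟨this.1, this.2⟩

end withh


/-- angle-to-root map -/
noncomputable def aroot (θ : ℝ) : ℝ := -(Real.tan θ ^ 2)

def AngRoots (P : Polynomial ℝ) (S : Multiset ℝ) : Prop :=
  P ≠ 0 ∧ P.natDegree = Multiset.card S ∧ (∀ θ ∈ S, 0 < θ ∧ θ < π / 2) ∧
    P.roots = S.map aroot

lemma aux_aroot_injOn {θ ψ : ℝ} (hθ1 : 0 < θ) (hθ2 : θ < π/2) (hψ1 : 0 < ψ) (hψ2 : ψ < π/2)
    (hr : aroot θ = aroot ψ) : θ = ψ := by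
  have h1 : Real.tan θ ^ 2 = Real.tan ψ ^ 2 := by
    have := neg_injective hr
    simpa [aroot] using hr
  have htθ : 0 < Real.tan θ := Real.tan_pos_of_pos_of_lt_pi_div_two hθ1 hθ2
  have htψ : 0 < Real.tan ψ := Real.tan_pos_of_pos_of_lt_pi_div_two hψ1 hψ2
  have h2 : Real.tan θ = Real.tan ψ := by nlinarith
  have hpi := Real.pi_pos
  exact Real.strictMonoOn_tan.injOn ⟨by linarith, hθ2⟩ ⟨by linarith, hψ2⟩ h2

lemma aux_aroot_le_iff {θ ψ : ℝ} (hθ1 : 0 < θ) (hθ2 : θ < π/2) (hψ1 : 0 < ψ) (hψ2 : ψ < π/2) :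
    aroot θ ≤ aroot ψ ↔ ψ ≤ θ := by
  have hpi := Real.pi_pos
  have htθ : 0 < Real.tan θ := Real.tan_pos_of_pos_of_lt_pi_div_two hθ1 hθ2
  have htψ : 0 < Real.tan ψ := Real.tan_pos_of_pos_of_lt_pi_div_two hψ1 hψ2
  constructor
  · intro hle
    by_contra hlt
    push_neg at hlt
    have h3 := Real.strictMonoOn_tan ⟨by linarith, hθ2⟩ ⟨by linarith, hψ2⟩ hlt
    simp only [aroot] at hle
    nlinarith
  · intro hle
    rcases eq_or_lt_of_le hle with rfl | hlt
    · exact le_refl _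
    · have h3 := Real.strictMonoOn_tan ⟨by linarith, hψ2⟩ ⟨by linarith, hθ2⟩ hlt
      simp only [aroot]
      nlinarith

lemma aux_angroots_of (P : Polynomial ℝ) (S : Multiset ℝ) (hP : P ≠ 0)
    (hd : P.natDegree = Multiset.card S) (hrange : ∀ θ ∈ S, 0 < θ ∧ θ < π / 2)
    (hnodup : S.Nodup) (hroot : ∀ θ ∈ S, P.eval (aroot θ) = 0) :
    AngRoots P S := by
  refine ⟨hP, hd, hrange, ?_⟩
  have hMnodup : (S.map aroot).Nodup := by
    refine Multiset.Nodup.map_on ?_ hnodup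
    intro x hx y hy hxy
    exact aux_aroot_injOn (hrange x hx).1 (hrange x hx).2 (hrange y hy).1 (hrange y hy).2 hxy
  have hle : S.map aroot ≤ P.roots := by
    rw [Multiset.le_iff_count]
    intro x
    by_cases hx : x ∈ S.map aroot
    · have h1 : Multiset.count x (S.map aroot) = 1 := by
        rw [Multiset.count_eq_one_of_mem hMnodup hx]
      rw [h1, Polynomial.count_roots]
      rcases Multiset.mem_map.mp hx with ⟨θ, hθS, rfl⟩
      exact (Polynomial.rootMultiplicity_pos hP).mpr (hroot θ hθS)
    · simp [Multiset.count_eq_zero_of_notMem hx]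
  have hcard : Multiset.card P.roots ≤ Multiset.card (S.map aroot) := by
    rw [Multiset.card_map, ← hd]
    exact P.card_roots'
  exact (Multiset.eq_of_le_of_card_le hle hcard).symm

lemma aux_angroots_card_roots (P : Polynomial ℝ) (S : Multiset ℝ) (hA : AngRoots P S) :
    Multiset.card P.roots = P.natDegree := by
  rw [hA.2.2.2, Multiset.card_map, hA.2.1]

lemma aux_realRooted (P : Polynomial ℝ) (S : Multiset ℝ) (hA : AngRoots P S) :
    RealRooted P := by
  right
  intro z hz
  have hsplit : Splits P :=
    Polynomial.splits_iff_card_roots.mpr (aux_angroots_card_roots P S hA)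
  have hfac := hsplit.eq_prod_roots
  have := congrArg (aeval z) hfac
  rw [hz] at this
  rw [map_mul, Polynomial.aeval_C, map_multiset_prod, Multiset.map_map] at this
  have hlc : (algebraMap ℝ ℂ) P.leadingCoeff ≠ 0 := by
    simp [Polynomial.leadingCoeff_ne_zero.mpr hA.1]
  rcases mul_eq_zero.mp this.symm with hbad | hprod
  · exact absurd hbad hlc
  have h0 : (0 : ℂ) ∈ Multiset.map (⇑(aeval z) ∘ fun a => X - Polynomial.C a) P.roots :=
    Multiset.prod_eq_zero_iff.mp hprod
  rcases Multiset.mem_map.mp h0 with ⟨r, hr, hr0⟩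
  simp only [Function.comp_apply, map_sub, aeval_X, Polynomial.aeval_C] at hr0
  have hzr : z = ((r : ℝ) : ℂ) := by
    have h5 := sub_eq_zero.mp hr0
    simpa using h5
  rw [hzr]
  simp

lemma aux_angroots_mul (P Q : Polynomial ℝ) (S T : Multiset ℝ)
    (hP : AngRoots P S) (hQ : AngRoots Q T) : AngRoots (P * Q) (S + T) := by
  have hne : P * Q ≠ 0 := mul_ne_zero hP.1 hQ.1
  refine ⟨hne, ?_, ?_, ?_⟩
  · rw [Polynomial.natDegree_mul hP.1 hQ.1, hP.2.1, hQ.2.1, Multiset.card_add]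
  · intro θ hθ
    rcases Multiset.mem_add.mp hθ with h1 | h1
    · exact hP.2.2.1 θ h1
    · exact hQ.2.2.1 θ h1
  · rw [Polynomial.roots_mul hne, hP.2.2.2, hQ.2.2.2, Multiset.map_add]

----- Part 4: counting machinery

noncomputable def cnt (S : Multiset ℝ) (ψ : ℝ) : ℕ := Multiset.card (S.filter (fun θ => ψ ≤ θ))

lemma aux_cnt_add (S T : Multiset ℝ) (ψ : ℝ) : cnt (S + T) ψ = cnt S ψ + cnt T ψ := by
  simp [cnt, Multiset.filter_add]

lemma aux_rank (l : List ℝ) (hl : l.Pairwise (· ≤ ·)) (x : ℝ) (i : ℕ) (hi : i < l.length) :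
    (l.getD i 0 ≤ x ↔ i + 1 ≤ l.countP (fun y => decide (y ≤ x))) := by
  induction l generalizing i with
  | nil => simp at hi
  | cons a t ih =>
    rw [List.pairwise_cons] at hl
    cases i with
    | zero =>
      simp only [List.getD_cons_zero, List.countP_cons]
      constructor
      · intro hax
        have : decide (a ≤ x) = true := by simpa using hax
        simp [this]
      · intro hcnt
        by_contra hax
        push_neg at hax
        have h0 : t.countP (fun y => decide (y ≤ x)) = 0 := by
          rw [List.countP_eq_zero]
          intro y hy
          have := hl.1 y hy
          simp only [decide_eq_true_eq]
          linarith
        have h1 : ¬(a ≤ x) := by linarith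
        simp [h0, h1] at hcnt
    | succ i =>
      simp only [List.getD_cons_succ, List.countP_cons]
      have hi' : i < t.length := by simpa using hi
      rw [ih hl.2 i hi']
      by_cases hax : a ≤ x
      · simp [hax]
      · have h0 : t.countP (fun y => decide (y ≤ x)) = 0 := by
          rw [List.countP_eq_zero]
          intro y hy
          have := hl.1 y hy
          simp only [decide_eq_true_eq]
          intro hc
          exact hax (by linarith)
        simp [h0, hax]

lemma aux_sroots_length (P : Polynomial ℝ) (S : Multiset ℝ) (hA : AngRoots P S) :
    (sroots P).length = Multiset.card S := by
  have : (↑(sroots P) : Multiset ℝ) = P.roots := Multiset.sort_eq _ _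
  have hlen : (sroots P).length = Multiset.card P.roots := by
    rw [← this]; simp
  rw [hlen, hA.2.2.2, Multiset.card_map]

lemma aux_getD_mem_roots (P : Polynomial ℝ) (S : Multiset ℝ) (hA : AngRoots P S) (i : ℕ)
    (hi : i < Multiset.card S) : ∃ ψ ∈ S, (sroots P).getD i 0 = aroot ψ := by
  have hlen := aux_sroots_length P S hA
  have hmem : (sroots P).getD i 0 ∈ sroots P := by
    rw [List.getD_eq_getElem?_getD]
    have : i < (sroots P).length := by omega
    rw [List.getElem?_eq_getElem this]
    simp only [Option.getD_some]
    exact List.getElem_mem this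
  have : (sroots P).getD i 0 ∈ P.roots := by
    rwa [← Multiset.mem_sort (· ≤ ·)]
  rw [hA.2.2.2] at this
  rcases Multiset.mem_map.mp this with ⟨ψ, hψ, hval⟩
  exact ⟨ψ, hψ, hval.symm⟩

lemma aux_countP_sroots (P : Polynomial ℝ) (S : Multiset ℝ) (hA : AngRoots P S) (ψ : ℝ)
    (h1 : 0 < ψ) (h2 : ψ < π / 2) :
    (sroots P).countP (fun y => decide (y ≤ aroot ψ)) = cnt S ψ := by
  have hcoe : (↑(sroots P) : Multiset ℝ) = P.roots := Multiset.sort_eq _ _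
  have hl : (sroots P).countP (fun y => decide (y ≤ aroot ψ))
      = Multiset.countP (fun y => y ≤ aroot ψ) P.roots := by
    rw [← hcoe]
    simp [Multiset.coe_countP]
  rw [hl, hA.2.2.2, Multiset.countP_map]
  have : Multiset.filter (fun a => aroot a ≤ aroot ψ) S = Multiset.filter (fun a => ψ ≤ a) S := by
    apply Multiset.filter_congr
    intro θ hθ
    have hr := hA.2.2.1 θ hθ
    exact aux_aroot_le_iff hr.1 hr.2 h1 h2
  rw [this]
  rfl

lemma aux_le (P Q : Polynomial ℝ) (S T : Multiset ℝ) (hP : AngRoots P S) (hQ : AngRoots Q T)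
    (i j : ℕ) (hi : i < Multiset.card S) (hj : j < Multiset.card T)
    (hc : ∀ ψ, 0 < ψ → ψ < π / 2 → j + 1 ≤ cnt T ψ → i + 1 ≤ cnt S ψ) :
    (sroots P).getD i 0 ≤ (sroots Q).getD j 0 := by
  obtain ⟨ψ, hψS, hval⟩ := aux_getD_mem_roots Q T hQ j hj
  have hψr := hQ.2.2.1 ψ hψS
  have hlenQ := aux_sroots_length Q T hQ
  have hlenP := aux_sroots_length P S hP
  have hsortQ : (sroots Q).Pairwise (· ≤ ·) := Multiset.pairwise_sort _ _
  have hsortP : (sroots P).Pairwise (· ≤ ·) := Multiset.pairwise_sort _ _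
  have h1 : j + 1 ≤ cnt T ψ := by
    rw [← aux_countP_sroots Q T hQ ψ hψr.1 hψr.2]
    rw [← hval]
    exact (aux_rank _ hsortQ _ j (by omega)).mp le_rfl
  have h2 := hc ψ hψr.1 hψr.2 h1
  rw [hval]
  refine (aux_rank (sroots P) hsortP (aroot ψ) i (by omega)).mpr ?_
  rwa [aux_countP_sroots P S hP ψ hψr.1 hψr.2]
----- Part 5: aux_prec

lemma aux_prec (P Q : Polynomial ℝ) (S T : Multiset ℝ)
    (hP : AngRoots P S) (hQ : AngRoots Q T)
    (H : ∀ ψ : ℝ, 0 < ψ → ψ < π / 2 →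
      (Multiset.card T = Multiset.card S + 1 ∧ cnt S ψ ≤ cnt T ψ ∧ cnt T ψ ≤ cnt S ψ + 1) ∨
      (Multiset.card T = Multiset.card S ∧ cnt T ψ ≤ cnt S ψ ∧ cnt S ψ ≤ cnt T ψ + 1)) :
    Prec P Q := by
  have hpi := Real.pi_pos
  right; right
  refine ⟨aux_realRooted P S hP, aux_realRooted Q T hQ, ?_⟩
  have hcard := H (π / 4) (by linarith) (by linarith)
  by_cases hcc : Multiset.card T = Multiset.card S + 1
  · left
    constructor
    · rw [hP.2.1, hQ.2.1, hcc]
    · intro i hi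
      rw [hP.2.1] at hi
      constructor
      · refine aux_le Q P T S hQ hP i i (by omega) hi ?_
        intro ψ h1 h2 h3
        rcases H ψ h1 h2 with ⟨_, hA, hB⟩ | ⟨hc0, _, _⟩
        · omega
        · omega
      · refine aux_le P Q S T hP hQ i (i + 1) hi (by omega) ?_
        intro ψ h1 h2 h3
        rcases H ψ h1 h2 with ⟨_, hA, hB⟩ | ⟨hc0, _, _⟩
        · omega
        · omega
  · have hcc2 : Multiset.card T = Multiset.card S := by
      rcases hcard with ⟨hc0, _, _⟩ | ⟨hc0, _, _⟩
      · exact absurd hc0 hcc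
      · exact hc0
    right
    refine ⟨by rw [hP.2.1, hQ.2.1, hcc2], ?_, ?_⟩
    · intro i hi
      rw [hP.2.1] at hi
      refine aux_le P Q S T hP hQ i i hi (by omega) ?_
      intro ψ h1 h2 h3
      rcases H ψ h1 h2 with ⟨hc0, _, _⟩ | ⟨_, hA, hB⟩
      · omega
      · omega
    · intro i hi
      rw [hP.2.1] at hi
      refine aux_le Q P T S hQ hP i (i + 1) (by omega) (by omega) ?_
      intro ψ h1 h2 h3
      rcases H ψ h1 h2 with ⟨hc0, _, _⟩ | ⟨_, hA, hB⟩
      · omega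
      · omega
----- Part 6: angle grids

noncomputable def thE (c k : ℕ) : ℝ := (2 * k + 1) * π / (2 * c)
noncomputable def thO (c k : ℕ) : ℝ := (2 * k + 2) * π / (2 * c)
noncomputable def SE (c : ℕ) : Multiset ℝ := (Multiset.range (c / 2)).map (thE c)
noncomputable def SO (c : ℕ) : Multiset ℝ := (Multiset.range ((c - 1) / 2)).map (thO c)
noncomputable def zn (c : ℕ) (ψ : ℝ) : ℕ := (⌈2 * c * ψ / π⌉).toNat

lemma aux_card_SE (c : ℕ) : Multiset.card (SE c) = c / 2 := by simp [SE]
lemma aux_card_SO (c : ℕ) : Multiset.card (SO c) = (c - 1) / 2 := by simp [SO]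

lemma aux_SE_range (c : ℕ) : ∀ θ ∈ SE c, 0 < θ ∧ θ < π / 2 := by
  intro θ hθ
  rcases Multiset.mem_map.mp hθ with ⟨k, hk, rfl⟩
  rw [Multiset.mem_range] at hk
  have hc : 2 * k + 1 < c := by omega
  have hcr : (2 * (k:ℝ) + 1) < c := by exact_mod_cast hc
  have hpi := Real.pi_pos
  have hc0 : (0:ℝ) < 2 * c := by linarith
  rw [thE]
  constructor
  · apply div_pos (by positivity) hc0
  · rw [div_lt_iff₀ hc0]
    have : (2 * (k:ℝ) + 1) * π < (c:ℝ) * π := by nlinarith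
    linarith [this]

lemma aux_SO_range (c : ℕ) : ∀ θ ∈ SO c, 0 < θ ∧ θ < π / 2 := by
  intro θ hθ
  rcases Multiset.mem_map.mp hθ with ⟨k, hk, rfl⟩
  rw [Multiset.mem_range] at hk
  have hc : 2 * k + 2 < c := by omega
  have hcr : (2 * (k:ℝ) + 2) < c := by exact_mod_cast hc
  have hpi := Real.pi_pos
  have hc0 : (0:ℝ) < 2 * c := by linarith
  rw [thO]
  constructor
  · apply div_pos (by positivity) hc0
  · rw [div_lt_iff₀ hc0]
    nlinarith

lemma aux_SE_nodup (c : ℕ) : (SE c).Nodup := by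
  refine Multiset.Nodup.map_on ?_ (Multiset.nodup_range _)
  intro x hx y hy hxy
  rw [Multiset.mem_range] at hx hy
  have hc0 : (0:ℝ) < 2 * c := by
    have : (1:ℝ) ≤ c := by exact_mod_cast Nat.one_le_iff_ne_zero.mpr (by omega)
    linarith
  have hpi := Real.pi_pos
  rw [thE, thE, div_eq_div_iff hc0.ne' hc0.ne'] at hxy
  have : (2 * (x:ℝ) + 1) = 2 * (y:ℝ) + 1 := by
    have h2 := mul_right_cancel₀ (by positivity : π * (2 * (c:ℝ)) ≠ 0) (by linarith [hxy] : (2 * (x:ℝ) + 1) * (π * (2 * c)) = (2 * (y:ℝ) + 1) * (π * (2 * c)))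
    exact h2
  have : (x:ℝ) = y := by linarith
  exact_mod_cast this

lemma aux_SO_nodup (c : ℕ) : (SO c).Nodup := by
  refine Multiset.Nodup.map_on ?_ (Multiset.nodup_range _)
  intro x hx y hy hxy
  rw [Multiset.mem_range] at hx hy
  have hc0 : (0:ℝ) < 2 * c := by
    have : (1:ℝ) ≤ c := by exact_mod_cast Nat.one_le_iff_ne_zero.mpr (by omega)
    linarith
  have hpi := Real.pi_pos
  rw [thO, thO, div_eq_div_iff hc0.ne' hc0.ne'] at hxy
  have : (2 * (x:ℝ) + 2) = 2 * (y:ℝ) + 2 := by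
    have h2 := mul_right_cancel₀ (by positivity : π * (2 * (c:ℝ)) ≠ 0) (by linarith [hxy] : (2 * (x:ℝ) + 2) * (π * (2 * c)) = (2 * (y:ℝ) + 2) * (π * (2 * c)))
    exact h2
  have : (x:ℝ) = y := by linarith
  exact_mod_cast this


lemma aux_card_filter_range (d m : ℕ) :
    Multiset.card ((Multiset.range d).filter (fun k => m ≤ k)) = d - min d m := by
  induction d with
  | zero => simp
  | succ n ih =>
    rw [Multiset.range_succ, Multiset.filter_cons, Multiset.card_add, ih]
    by_cases hm : m ≤ n
    · rw [if_pos hm]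
      simp only [Multiset.card_singleton]
      omega
    · rw [if_neg hm]
      simp only [Multiset.card_zero]
      omega

section withh2
variable (Ep Op : ℕ → Polynomial ℝ)
  (h : ∀ c : ℕ, (X + 1) ^ c = (Ep c).comp (X ^ 2) + X * (Op c).comp (X ^ 2))
include h

lemma aux_angE (c : ℕ) : AngRoots (Ep c) (SE c) := by
  apply aux_angroots_of _ _ (aux_EpNe Ep Op h c)
  · rw [aux_natDegE Ep Op h c, aux_card_SE]
  · exact aux_SE_range c
  · exact aux_SE_nodup c
  · intro θ hθ
    rcases Multiset.mem_map.mp hθ with ⟨k, hk, rfl⟩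
    rw [Multiset.mem_range] at hk
    have hb := aux_SE_range c _ hθ
    have hcos : 0 < Real.cos (thE c k) := Real.cos_pos_of_mem_Ioo ⟨by linarith [hb.1, Real.pi_pos], hb.2⟩
    have hkey := (aux_eval Ep Op h c (thE c k) hb.1 hb.2).1
    have hcc : (c:ℝ) ≠ 0 := by
      exact_mod_cast Nat.cast_ne_zero.mpr (by omega)
    have hmul : (c:ℝ) * thE c k = (2 * (k:ℤ) + 1) * π / 2 := by
      rw [thE]
      push_cast
      field_simp
    rw [hmul] at hkey
    have hz : Real.cos ((2 * (k:ℤ) + 1) * π / 2) = 0 := Real.cos_eq_zero_iff.mpr ⟨k, rfl⟩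
    rw [hz] at hkey
    have hcp : Real.cos (thE c k) ^ c ≠ 0 := by positivity
    have := mul_eq_zero.mp hkey
    rcases this with hh | hh
    · exact absurd hh hcp
    · exact hh

lemma aux_angO (c : ℕ) (hc : 1 ≤ c) : AngRoots (Op c) (SO c) := by
  apply aux_angroots_of _ _ (aux_OpNe Ep Op h c hc)
  · rw [aux_natDegO Ep Op h c hc, aux_card_SO]
  · exact aux_SO_range c
  · exact aux_SO_nodup c
  · intro θ hθ
    rcases Multiset.mem_map.mp hθ with ⟨k, hk, rfl⟩
    rw [Multiset.mem_range] at hk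
    have hb := aux_SO_range c _ hθ
    have hcos : 0 < Real.cos (thO c k) := Real.cos_pos_of_mem_Ioo ⟨by linarith [hb.1, Real.pi_pos], hb.2⟩
    have htan : 0 < Real.tan (thO c k) := Real.tan_pos_of_pos_of_lt_pi_div_two hb.1 hb.2
    have hkey := (aux_eval Ep Op h c (thO c k) hb.1 hb.2).2
    have hcc : (c:ℝ) ≠ 0 := by
      exact_mod_cast Nat.cast_ne_zero.mpr (by omega)
    have hmul : (c:ℝ) * thO c k = ((k+1 : ℕ) : ℝ) * π := by
      rw [thO]
      push_cast
      field_simp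
    rw [hmul, Real.sin_nat_mul_pi] at hkey
    have hcp : Real.cos (thO c k) ^ c ≠ 0 := by positivity
    rcases mul_eq_zero.mp hkey with hh | hh
    · exact absurd hh hcp
    · rcases mul_eq_zero.mp hh with hh2 | hh2
      · exact absurd hh2 (ne_of_gt htan)
      · exact hh2

end withh2

lemma aux_zn_le (c : ℕ) (ψ : ℝ) (h1 : 0 < ψ) (h2 : ψ < π / 2) : zn c ψ ≤ c := by
  rw [zn, Int.toNat_le, Int.ceil_le]
  have hpi := Real.pi_pos
  rw [div_le_iff₀ hpi]
  push_cast
  nlinarith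

lemma aux_zn_pos (c : ℕ) (hc : 1 ≤ c) (ψ : ℝ) (h1 : 0 < ψ) : 1 ≤ zn c ψ := by
  have hpi := Real.pi_pos
  have : 0 < ⌈2 * (c:ℝ) * ψ / π⌉ := by
    rw [Int.ceil_pos]
    have : (1:ℝ) ≤ c := by exact_mod_cast hc
    positivity
  rw [zn]
  omega

lemma aux_zn_addl (a b : ℕ) (ψ : ℝ) (hψ : 0 < ψ) :
    zn (a + b) ψ ≤ zn a ψ + zn b ψ ∧ zn a ψ + zn b ψ ≤ zn (a + b) ψ + 1 := by
  have hpi := Real.pi_pos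
  set x := 2 * (a:ℝ) * ψ / π with hx
  set y := 2 * (b:ℝ) * ψ / π with hy
  have hxy : 2 * ((a + b : ℕ):ℝ) * ψ / π = x + y := by
    rw [hx, hy, ← add_div]
    push_cast
    ring_nf
  have h1 : ⌈x + y⌉ ≤ ⌈x⌉ + ⌈y⌉ := Int.ceil_add_le x y
  have h2 : ⌈x⌉ + ⌈y⌉ ≤ ⌈x + y⌉ + 1 := by
    have hx1 := Int.ceil_lt_add_one x
    have hy1 := Int.ceil_lt_add_one y
    have hxy1 := Int.le_ceil (x + y)
    have hlt : ((⌈x⌉ + ⌈y⌉ : ℤ) : ℝ) < ((⌈x + y⌉ + 2 : ℤ) : ℝ) := by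
      push_cast
      linarith
    have : (⌈x⌉ + ⌈y⌉ : ℤ) < (⌈x + y⌉ + 2 : ℤ) := by exact_mod_cast hlt
    omega
  have hxnn : (0:ℤ) ≤ ⌈x⌉ := Int.ceil_nonneg (by rw [hx]; positivity)
  have hynn : (0:ℤ) ≤ ⌈y⌉ := Int.ceil_nonneg (by rw [hy]; positivity)
  simp only [zn, hxy, ← hx, ← hy]
  omega

lemma aux_cnt_SE (c : ℕ) (ψ : ℝ) (h1 : 0 < ψ) (h2 : ψ < π / 2) :
    cnt (SE c) ψ = c / 2 - min (c / 2) (zn c ψ / 2) := by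
  rcases Nat.eq_zero_or_pos c with rfl | hc
  · simp [SE, cnt]
  have hpi := Real.pi_pos
  have hcR : (0:ℝ) < 2 * c := by
    have : (1:ℝ) ≤ c := by exact_mod_cast hc
    linarith
  rw [cnt, SE, ← Multiset.countP_eq_card_filter, Multiset.countP_map,
      ← aux_card_filter_range (c / 2) (zn c ψ / 2)]
  congr 1
  apply Multiset.filter_congr
  intro k hk
  rw [thE]
  constructor
  · intro hle
    have h3 : 2 * (c:ℝ) * ψ / π ≤ 2 * (k:ℝ) + 1 := by
      rw [div_le_iff₀ hpi]
      rw [le_div_iff₀ hcR] at hle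
      nlinarith
    have h4 : ⌈2 * (c:ℝ) * ψ / π⌉ ≤ ((2 * k + 1 : ℕ) : ℤ) := by
      rw [Int.ceil_le]
      push_cast
      exact_mod_cast h3
    have h5 : zn c ψ ≤ 2 * k + 1 := by
      rw [zn]
      omega
    omega
  · intro hle
    have h5 : zn c ψ ≤ 2 * k + 1 := by omega
    have h4 : ⌈2 * (c:ℝ) * ψ / π⌉ ≤ ((2 * k + 1 : ℕ) : ℤ) := by
      rw [zn] at h5
      omega
    rw [Int.ceil_le] at h4
    rw [le_div_iff₀ hcR]
    rw [div_le_iff₀ hpi] at h4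
    push_cast at h4
    nlinarith

lemma aux_cnt_SO (c : ℕ) (ψ : ℝ) (h1 : 0 < ψ) (h2 : ψ < π / 2) :
    cnt (SO c) ψ = (c - 1) / 2 - min ((c - 1) / 2) ((zn c ψ - 1) / 2) := by
  rcases Nat.eq_zero_or_pos c with rfl | hc
  · simp [SO, cnt]
  have hpi := Real.pi_pos
  have hcR : (0:ℝ) < 2 * c := by
    have : (1:ℝ) ≤ c := by exact_mod_cast hc
    linarith
  have hzpos := aux_zn_pos c hc ψ h1
  rw [cnt, SO, ← Multiset.countP_eq_card_filter, Multiset.countP_map,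
      ← aux_card_filter_range ((c - 1) / 2) ((zn c ψ - 1) / 2)]
  congr 1
  apply Multiset.filter_congr
  intro k hk
  rw [thO]
  constructor
  · intro hle
    have h3 : 2 * (c:ℝ) * ψ / π ≤ 2 * (k:ℝ) + 2 := by
      rw [div_le_iff₀ hpi]
      rw [le_div_iff₀ hcR] at hle
      nlinarith
    have h4 : ⌈2 * (c:ℝ) * ψ / π⌉ ≤ ((2 * k + 2 : ℕ) : ℤ) := by
      rw [Int.ceil_le]
      push_cast
      exact_mod_cast h3
    have h5 : zn c ψ ≤ 2 * k + 2 := by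
      rw [zn]
      omega
    omega
  · intro hle
    have h5 : zn c ψ ≤ 2 * k + 2 := by omega
    have h4 : ⌈2 * (c:ℝ) * ψ / π⌉ ≤ ((2 * k + 2 : ℕ) : ℤ) := by
      rw [zn] at h5
      omega
    rw [Int.ceil_le] at h4
    rw [le_div_iff₀ hcR]
    rw [div_le_iff₀ hpi] at h4
    push_cast at h4
    nlinarith

lemma aux_zn_zero (ψ : ℝ) : zn 0 ψ = 0 := by simp [zn]


/-- Lemma 3.1: with `E_c, O_c` the even and odd parts of `(u+1)^c`, for all naturals `a, b`:
`O_{a+b} ≺ E_{a+b}`, `E_a O_b ≺ E_{a+b}`, `O_a E_b ≺ E_{a+b}`, and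
`O_a O_b ≺ O_{a+b} ≺ E_a E_b`. -/
theorem stmt11 (Ep Op : ℕ → Polynomial ℝ)
    (h : ∀ c : ℕ, (X + 1) ^ c = (Ep c).comp (X ^ 2) + X * (Op c).comp (X ^ 2))
    (a b : ℕ) :
    Prec (Op (a + b)) (Ep (a + b)) ∧
    Prec (Ep a * Op b) (Ep (a + b)) ∧
    Prec (Op a * Ep b) (Ep (a + b)) ∧
    Prec (Op a * Op b) (Op (a + b)) ∧
    Prec (Op (a + b)) (Ep a * Ep b) := by
  have hOp0 : Op 0 = 0 := aux_Op0 Ep Op h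
  refine ⟨?_, ?_, ?_, ?_, ?_⟩
  · -- O_{a+b} ≺ E_{a+b}
    rcases Nat.eq_zero_or_pos (a + b) with hab | hab
    · rw [hab, hOp0]; exact Or.inl rfl
    · refine aux_prec _ _ _ _ (aux_angO Ep Op h _ hab) (aux_angE Ep Op h _) ?_
      intro ψ h1 h2
      rw [aux_cnt_SE _ _ h1 h2, aux_cnt_SO _ _ h1 h2, aux_card_SE, aux_card_SO]
      have hz1 := aux_zn_pos (a + b) hab ψ h1
      have hz2 := aux_zn_le (a + b) ψ h1 h2
      omega
  · -- E_a O_b ≺ E_{a+b}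
    rcases Nat.eq_zero_or_pos b with rfl | hb
    · rw [hOp0, mul_zero]; exact Or.inl rfl
    · refine aux_prec _ _ _ _
        (aux_angroots_mul _ _ _ _ (aux_angE Ep Op h a) (aux_angO Ep Op h b hb))
        (aux_angE Ep Op h (a + b)) ?_
      intro ψ h1 h2
      rw [Multiset.card_add, aux_cnt_add, aux_cnt_SE a ψ h1 h2, aux_cnt_SO b ψ h1 h2,
        aux_cnt_SE (a + b) ψ h1 h2, aux_card_SE, aux_card_SE, aux_card_SO]
      have hzc1 := aux_zn_pos (a + b) (by omega) ψ h1
      have hzc2 := aux_zn_le (a + b) ψ h1 h2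
      have hza2 := aux_zn_le a ψ h1 h2
      have hzb1 := aux_zn_pos b hb ψ h1
      have hzb2 := aux_zn_le b ψ h1 h2
      have hadd := aux_zn_addl a b ψ h1
      rcases Nat.eq_zero_or_pos a with rfl | ha
      · rw [aux_zn_zero ψ] at *
        omega
      · have hza1 := aux_zn_pos a ha ψ h1
        omega
  · -- O_a E_b ≺ E_{a+b}
    rcases Nat.eq_zero_or_pos a with rfl | ha
    · rw [hOp0, zero_mul]; exact Or.inl rfl
    · refine aux_prec _ _ _ _
        (aux_angroots_mul _ _ _ _ (aux_angO Ep Op h a ha) (aux_angE Ep Op h b))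
        (aux_angE Ep Op h (a + b)) ?_
      intro ψ h1 h2
      rw [Multiset.card_add, aux_cnt_add, aux_cnt_SO a ψ h1 h2, aux_cnt_SE b ψ h1 h2,
        aux_cnt_SE (a + b) ψ h1 h2, aux_card_SE, aux_card_SE, aux_card_SO]
      have hzc1 := aux_zn_pos (a + b) (by omega) ψ h1
      have hzc2 := aux_zn_le (a + b) ψ h1 h2
      have hza1 := aux_zn_pos a ha ψ h1
      have hza2 := aux_zn_le a ψ h1 h2
      have hzb2 := aux_zn_le b ψ h1 h2
      have hadd := aux_zn_addl a b ψ h1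
      rcases Nat.eq_zero_or_pos b with rfl | hb
      · rw [aux_zn_zero ψ] at *
        omega
      · have hzb1 := aux_zn_pos b hb ψ h1
        omega
  · -- O_a O_b ≺ O_{a+b}
    rcases Nat.eq_zero_or_pos a with rfl | ha
    · rw [hOp0, zero_mul]; exact Or.inl rfl
    rcases Nat.eq_zero_or_pos b with rfl | hb
    · rw [hOp0, mul_zero]; exact Or.inl rfl
    refine aux_prec _ _ _ _
      (aux_angroots_mul _ _ _ _ (aux_angO Ep Op h a ha) (aux_angO Ep Op h b hb))
      (aux_angO Ep Op h (a + b) (by omega)) ?_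
    intro ψ h1 h2
    rw [Multiset.card_add, aux_cnt_add, aux_cnt_SO a ψ h1 h2, aux_cnt_SO b ψ h1 h2,
      aux_cnt_SO (a + b) ψ h1 h2, aux_card_SO, aux_card_SO, aux_card_SO]
    have hzc1 := aux_zn_pos (a + b) (by omega) ψ h1
    have hzc2 := aux_zn_le (a + b) ψ h1 h2
    have hza1 := aux_zn_pos a ha ψ h1
    have hza2 := aux_zn_le a ψ h1 h2
    have hzb1 := aux_zn_pos b hb ψ h1
    have hzb2 := aux_zn_le b ψ h1 h2
    have hadd := aux_zn_addl a b ψ h1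
    omega
  · -- O_{a+b} ≺ E_a E_b
    rcases Nat.eq_zero_or_pos (a + b) with hab | hab
    · rw [hab, hOp0]; exact Or.inl rfl
    refine aux_prec _ _ _ _ (aux_angO Ep Op h (a + b) hab)
      (aux_angroots_mul _ _ _ _ (aux_angE Ep Op h a) (aux_angE Ep Op h b)) ?_
    intro ψ h1 h2
    rw [Multiset.card_add, aux_cnt_add, aux_cnt_SE a ψ h1 h2, aux_cnt_SE b ψ h1 h2,
      aux_cnt_SO (a + b) ψ h1 h2, aux_card_SE, aux_card_SE, aux_card_SO]
    have hzc1 := aux_zn_pos (a + b) hab ψ h1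
    have hzc2 := aux_zn_le (a + b) ψ h1 h2
    have hza2 := aux_zn_le a ψ h1 h2
    have hzb2 := aux_zn_le b ψ h1 h2
    have hadd := aux_zn_addl a b ψ h1
    rcases Nat.eq_zero_or_pos a with rfl | ha
    · rw [aux_zn_zero ψ] at *
      omega
    rcases Nat.eq_zero_or_pos b with rfl | hb
    · rw [aux_zn_zero ψ] at *
      omega
    have hza1 := aux_zn_pos a ha ψ h1
    have hzb1 := aux_zn_pos b hb ψ h1
    omega
end

section
/- Let A, B, P, Q be real polynomials such that A ≺ B and P ≺ Q are pairs of standard polynomials with only real nonpositive zeros. Then for all λ, ρ > 0, λAP + ρBP ≺ λAQ + ρBQ and λBP + ρxAP ≺ λBQ + ρxAQ; i.e., (AP, BP, AQ, BQ) forms an interpolatory square. -/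
open Polynomial

noncomputable def cntL (t : ℝ) (l : List ℝ) : ℕ := l.countP (fun a => decide (a ≤ t))

def ILx (x y : List ℝ) : Prop :=
  ∀ i < x.length, y.getD i 0 ≤ x.getD i 0 ∧ x.getD i 0 ≤ y.getD (i + 1) 0

def ALx (x y : List ℝ) : Prop :=
  (∀ i < x.length, x.getD i 0 ≤ y.getD i 0) ∧
    ∀ i, i + 1 < x.length → y.getD i 0 ≤ x.getD (i + 1) 0

lemma getD_le_iff {l : List ℝ} (hs : l.Pairwise (· ≤ ·)) {i : ℕ} (hi : i < l.length) (t : ℝ) :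
    (l.getD i 0 ≤ t ↔ i < cntL t l) := by
  induction l generalizing i with
  | nil => simp at hi
  | cons a l ih =>
    rw [List.pairwise_cons] at hs
    unfold cntL at *
    rcases i with _ | i
    · simp only [List.getD_cons_zero]
      constructor
      · intro h
        rw [List.countP_cons]
        simp [h]
      · intro h
        rcases List.countP_pos_iff.mp h with ⟨x, hx, hxt⟩
        simp only [decide_eq_true_eq] at hxt
        rcases List.mem_cons.mp hx with rfl | hx
        · exact hxt
        · exact le_trans (hs.1 x hx) hxt
    · simp only [List.getD_cons_succ]
      simp only [List.length_cons, Nat.succ_lt_succ_iff] at hi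
      by_cases hat : a ≤ t
      · rw [List.countP_cons]
        simp only [hat, decide_true, if_pos, decide_eq_true_eq]
        rw [ih hs.2 hi]
        omega
      · have h0 : List.countP (fun a => decide (a ≤ t)) (a :: l) = 0 := by
          rw [List.countP_eq_zero]
          intro x hx
          simp only [decide_eq_true_eq]
          rcases List.mem_cons.mp hx with rfl | hx
          · exact hat
          · exact fun hxt => hat (le_trans (hs.1 x hx) hxt)
        rw [h0]
        simp only [Nat.not_lt_zero, iff_false, not_le]
        have : a ≤ l.getD i 0 := by
          rw [List.getD_eq_getElem l 0 hi]
          exact hs.1 _ (l.getElem_mem hi)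
        have := not_le.mp hat
        push_neg at hat
        linarith


lemma cnt_of_IL {x y : List ℝ} (hx : x.Pairwise (· ≤ ·)) (hy : y.Pairwise (· ≤ ·))
    (hlen : y.length = x.length + 1) (h : ILx x y) (t : ℝ) :
    cntL t x ≤ cntL t y ∧ cntL t y ≤ cntL t x + 1 := by
  constructor
  · rcases Nat.eq_zero_or_pos (cntL t x) with h0 | h0
    · omega
    · have hcx : cntL t x ≤ x.length := List.countP_le_length
      have h1 : cntL t x - 1 < x.length := by omega
      have h2 : x.getD (cntL t x - 1) 0 ≤ t := (getD_le_iff hx h1 t).mpr (by omega)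
      have h3 : y.getD (cntL t x - 1) 0 ≤ t := le_trans ((h _ h1).1) h2
      have h4 : cntL t x - 1 < cntL t y := (getD_le_iff hy (by omega) t).mp h3
      omega
  · rcases Nat.lt_or_ge (cntL t y) 2 with h0 | h0
    · omega
    · have hcy : cntL t y ≤ y.length := List.countP_le_length
      have h1 : cntL t y - 1 < y.length := by omega
      have h2 : y.getD (cntL t y - 1) 0 ≤ t := (getD_le_iff hy h1 t).mpr (by omega)
      have h5 : cntL t y - 2 < x.length := by omega
      have h3 : x.getD (cntL t y - 2) 0 ≤ t := by
        refine le_trans ?_ h2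
        have := (h _ h5).2
        have e : cntL t y - 2 + 1 = cntL t y - 1 := by omega
        rwa [e] at this
      have h4 : cntL t y - 2 < cntL t x := (getD_le_iff hx h5 t).mp h3
      omega

lemma IL_of_cnt {x y : List ℝ} (hx : x.Pairwise (· ≤ ·)) (hy : y.Pairwise (· ≤ ·))
    (hlen : y.length = x.length + 1)
    (h : ∀ t, cntL t x ≤ cntL t y ∧ cntL t y ≤ cntL t x + 1) : ILx x y := by
  intro i hi
  constructor
  · set t := x.getD i 0 with ht
    have h1 : i < cntL t x := (getD_le_iff hx hi t).mp le_rfl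
    have h2 : i < cntL t y := lt_of_lt_of_le h1 (h t).1
    exact (getD_le_iff hy (by omega) t).mpr h2
  · set t := y.getD (i + 1) 0 with ht
    have h1 : i + 1 < cntL t y := (getD_le_iff hy (by omega) t).mp le_rfl
    have h2 : i < cntL t x := by have := (h t).2; omega
    exact (getD_le_iff hx hi t).mpr h2

lemma cnt_of_AL {x y : List ℝ} (hx : x.Pairwise (· ≤ ·)) (hy : y.Pairwise (· ≤ ·))
    (hlen : y.length = x.length) (h : ALx x y) (t : ℝ) :
    cntL t y ≤ cntL t x ∧ cntL t x ≤ cntL t y + 1 := by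
  constructor
  · rcases Nat.eq_zero_or_pos (cntL t y) with h0 | h0
    · omega
    · have hcy : cntL t y ≤ y.length := List.countP_le_length
      have h1 : cntL t y - 1 < y.length := by omega
      have h2 : y.getD (cntL t y - 1) 0 ≤ t := (getD_le_iff hy h1 t).mpr (by omega)
      have h3 : x.getD (cntL t y - 1) 0 ≤ t := le_trans (h.1 _ (by omega)) h2
      have h4 : cntL t y - 1 < cntL t x := (getD_le_iff hx (by omega) t).mp h3
      omega
  · rcases Nat.lt_or_ge (cntL t x) 2 with h0 | h0
    · omega
    · have hcx : cntL t x ≤ x.length := List.countP_le_length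
      have h1 : cntL t x - 1 < x.length := by omega
      have h2 : x.getD (cntL t x - 1) 0 ≤ t := (getD_le_iff hx h1 t).mpr (by omega)
      have h3 : y.getD (cntL t x - 2) 0 ≤ t := by
        refine le_trans ?_ h2
        have := h.2 (cntL t x - 2) (by omega)
        have e : cntL t x - 2 + 1 = cntL t x - 1 := by omega
        rwa [e] at this
      have h4 : cntL t x - 2 < cntL t y := (getD_le_iff hy (by omega) t).mp h3
      omega

lemma AL_of_cnt {x y : List ℝ} (hx : x.Pairwise (· ≤ ·)) (hy : y.Pairwise (· ≤ ·))
    (hlen : y.length = x.length)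
    (h : ∀ t, cntL t y ≤ cntL t x ∧ cntL t x ≤ cntL t y + 1) : ALx x y := by
  constructor
  · intro i hi
    set t := y.getD i 0 with ht
    have h1 : i < cntL t y := (getD_le_iff hy (by omega) t).mp le_rfl
    have h2 : i < cntL t x := lt_of_lt_of_le h1 (h t).1
    exact (getD_le_iff hx (by omega) t).mpr h2
  · intro i hi
    set t := x.getD (i + 1) 0 with ht
    have h1 : i + 1 < cntL t x := (getD_le_iff hx (by omega) t).mp le_rfl
    have h2 : i < cntL t y := by have := (h t).2; omega
    exact (getD_le_iff hy (by omega) t).mpr h2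


lemma sum_map_eq (f : ℝ → ℝ) (l : List ℝ) :
    (l.map f).sum = ∑ i ∈ Finset.range l.length, f (l.getD i 0) := by
  induction l with
  | nil => simp
  | cons a l ih =>
    rw [List.map_cons, List.sum_cons, ih, List.length_cons, Finset.sum_range_succ']
    simp [List.getD_cons_succ, List.getD_cons_zero, add_comm]

lemma theta_IL {f : ℝ → ℝ} (hmono : ∀ s u : ℝ, s ≤ u → f s ≤ f u)
    (hlo : ∀ s, 0 < f s) (hhi : ∀ s, f s < Real.pi)
    {x y : List ℝ} (hlen : y.length = x.length + 1) (hIL : ILx x y) :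
    0 ≤ (y.map f).sum - (x.map f).sum ∧ (y.map f).sum - (x.map f).sum < Real.pi := by
  rw [sum_map_eq, sum_map_eq, hlen]
  constructor
  · rw [Finset.sum_range_succ']
    have : ∑ i ∈ Finset.range x.length, f (x.getD i 0)
        ≤ ∑ i ∈ Finset.range x.length, f (y.getD (i + 1) 0) := by
      refine Finset.sum_le_sum fun i hi => hmono _ _ ?_
      exact (hIL i (Finset.mem_range.mp hi)).2
    have h0 := (hlo (y.getD 0 0)).le
    linarith
  · rw [Finset.sum_range_succ]
    have : ∑ i ∈ Finset.range x.length, f (y.getD i 0)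
        ≤ ∑ i ∈ Finset.range x.length, f (x.getD i 0) := by
      refine Finset.sum_le_sum fun i hi => hmono _ _ ?_
      exact (hIL i (Finset.mem_range.mp hi)).1
    have h0 := hhi (y.getD x.length 0)
    linarith

lemma theta_AL {f : ℝ → ℝ} (hmono : ∀ s u : ℝ, s ≤ u → f s ≤ f u)
    (hlo : ∀ s, 0 < f s) (hhi : ∀ s, f s < Real.pi)
    {x y : List ℝ} (hlen : y.length = x.length) (hAL : ALx x y) :
    0 ≤ (y.map f).sum - (x.map f).sum ∧ (y.map f).sum - (x.map f).sum < Real.pi := by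
  rw [sum_map_eq, sum_map_eq, hlen]
  constructor
  · have : ∑ i ∈ Finset.range x.length, f (x.getD i 0)
        ≤ ∑ i ∈ Finset.range x.length, f (y.getD i 0) := by
      refine Finset.sum_le_sum fun i hi => hmono _ _ ?_
      exact hAL.1 i (Finset.mem_range.mp hi)
    linarith
  · rcases Nat.eq_zero_or_pos x.length with h0 | h0
    · rw [h0]
      simpa using Real.pi_pos
    · obtain ⟨k, hk⟩ : ∃ k, x.length = k + 1 := ⟨x.length - 1, by omega⟩
      rw [hk, Finset.sum_range_succ, Finset.sum_range_succ' (fun i => f (x.getD i 0))]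
      have : ∑ i ∈ Finset.range k, f (y.getD i 0)
          ≤ ∑ i ∈ Finset.range k, f (x.getD (i + 1) 0) := by
        refine Finset.sum_le_sum fun i hi => hmono _ _ ?_
        exact hAL.2 i (by rw [hk]; have := Finset.mem_range.mp hi; omega)
      have h1 := hhi (y.getD k 0)
      have h2 := hlo (x.getD 0 0)
      linarith

lemma div_sqrt_mono {y x1 x2 : ℝ} (hy : 0 < y) (h : x1 ≤ x2) :
    x1 / Real.sqrt (x1 ^ 2 + y ^ 2) ≤ x2 / Real.sqrt (x2 ^ 2 + y ^ 2) := by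
  have hr1 : 0 < Real.sqrt (x1 ^ 2 + y ^ 2) := Real.sqrt_pos.mpr (by positivity)
  have hr2 : 0 < Real.sqrt (x2 ^ 2 + y ^ 2) := Real.sqrt_pos.mpr (by positivity)
  have e1 : Real.sqrt (x1 ^ 2 + y ^ 2) ^ 2 = x1 ^ 2 + y ^ 2 := Real.sq_sqrt (by positivity)
  have e2 : Real.sqrt (x2 ^ 2 + y ^ 2) ^ 2 = x2 ^ 2 + y ^ 2 := Real.sq_sqrt (by positivity)
  rw [div_le_div_iff₀ hr1 hr2]
  rcases le_or_gt x1 0 with h1 | h1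
  · rcases le_or_gt 0 x2 with h2 | h2
    · have : x1 * Real.sqrt (x2 ^ 2 + y ^ 2) ≤ 0 := mul_nonpos_of_nonpos_of_nonneg h1 hr2.le
      have : 0 ≤ x2 * Real.sqrt (x1 ^ 2 + y ^ 2) := mul_nonneg h2 hr1.le
      linarith
    · have hx : x2 ^ 2 ≤ x1 ^ 2 := by nlinarith
      have hsq : ((-x2) * Real.sqrt (x1 ^ 2 + y ^ 2)) ^ 2 ≤ ((-x1) * Real.sqrt (x2 ^ 2 + y ^ 2)) ^ 2 := by
        have := mul_le_mul_of_nonneg_right hx (sq_nonneg y)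
        nlinarith
      have hkey : (-x2) * Real.sqrt (x1 ^ 2 + y ^ 2) ≤ (-x1) * Real.sqrt (x2 ^ 2 + y ^ 2) :=
        (pow_le_pow_iff_left₀ (mul_nonneg (by linarith) hr1.le) (mul_nonneg (by linarith) hr2.le) (by norm_num)).mp hsq
      linarith
  · have hx : x1 ^ 2 ≤ x2 ^ 2 := by nlinarith
    have hsq : (x1 * Real.sqrt (x2 ^ 2 + y ^ 2)) ^ 2 ≤ (x2 * Real.sqrt (x1 ^ 2 + y ^ 2)) ^ 2 := by
      have := mul_le_mul_of_nonneg_right hx (sq_nonneg y)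
      nlinarith
    exact (pow_le_pow_iff_left₀ (mul_nonneg h1.le hr2.le) (mul_nonneg (by linarith) hr1.le) (by norm_num)).mp hsq

lemma im_sub_real (z : ℂ) (t : ℝ) : (z - (t : ℂ)).im = z.im := by simp

lemma arg_pos_of_im_pos {w : ℂ} (hw : 0 < w.im) : 0 < w.arg := by
  rcases lt_or_eq_of_le (Complex.arg_nonneg_iff.mpr hw.le) with h | h
  · exact h
  · exfalso
    have := Complex.arg_eq_zero_iff.mp h.symm
    linarith [this.2]

lemma arg_lt_pi_of_im_pos {w : ℂ} (hw : 0 < w.im) : w.arg < Real.pi := by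
  rcases lt_or_eq_of_le (Complex.arg_le_pi w) with h | h
  · exact h
  · exfalso
    have := Complex.arg_eq_pi_iff.mp h
    linarith [this.2]

lemma arg_mono {z : ℂ} (hz : 0 < z.im) {s u : ℝ} (h : s ≤ u) :
    (z - (s : ℂ)).arg ≤ (z - (u : ℂ)).arg := by
  set a := z - (u : ℂ) with ha
  set b := z - (s : ℂ) with hb
  have hai : a.im = z.im := im_sub_real z u
  have hbi : b.im = z.im := im_sub_real z s
  have ha0 : a ≠ 0 := fun h => by rw [h] at hai; simp at hai; linarith [hai ▸ hz]
  have hb0 : b ≠ 0 := fun h => by rw [h] at hbi; simp at hbi; linarith [hbi ▸ hz]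
  have hre : a.re ≤ b.re := by simp only [ha, hb, Complex.sub_re, Complex.ofReal_re]; linarith
  have hcos : Real.cos a.arg ≤ Real.cos b.arg := by
    rw [Complex.cos_arg ha0, Complex.cos_arg hb0]
    have eab : ‖a‖ = Real.sqrt (a.re ^ 2 + z.im ^ 2) := by
      rw [Complex.norm_def, Complex.normSq_apply, ← hai]; ring_nf
    have ebb : ‖b‖ = Real.sqrt (b.re ^ 2 + z.im ^ 2) := by
      rw [Complex.norm_def, Complex.normSq_apply, ← hbi]; ring_nf
    rw [eab, ebb]
    exact div_sqrt_mono hz hre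
  by_contra hc
  push_neg at hc
  have h1 : a.arg ∈ Set.Icc 0 Real.pi :=
    ⟨Complex.arg_nonneg_iff.mpr (by rw [hai]; exact hz.le), Complex.arg_le_pi a⟩
  have h2 : b.arg ∈ Set.Icc 0 Real.pi :=
    ⟨Complex.arg_nonneg_iff.mpr (by rw [hbi]; exact hz.le), Complex.arg_le_pi b⟩
  have := Real.strictAntiOn_cos h1 h2 hc
  linarith

lemma splits_of_real : ∀ (n : ℕ) (P : Polynomial ℝ), P.natDegree = n → P ≠ 0 →
    (∀ z : ℂ, (aeval z) P = 0 → z.im = 0) → Multiset.card P.roots = P.natDegree := by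
  intro n
  induction n using Nat.strong_induction_on with
  | _ n ih =>
    intro P hn h0 h
    rcases Nat.eq_zero_or_pos n with h' | h'
    · have := P.card_roots'
      omega
    · have hdm : (P.map (algebraMap ℝ ℂ)).natDegree = n := by
        rw [natDegree_map_eq_of_injective (algebraMap ℝ ℂ).injective, hn]
      have hdeg : 0 < (P.map (algebraMap ℝ ℂ)).degree := by
        rw [← natDegree_pos_iff_degree_pos, hdm]; exact h'
      obtain ⟨z, hz⟩ := Complex.exists_root hdeg
      have hz' : aeval z P = 0 := by rwa [aeval_def, ← eval_map]
      have hzi : z.im = 0 := h z hz'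
      have hzr : z = ((z.re : ℝ) : ℂ) := Complex.ext (by simp) (by simp [hzi])
      have hroot : P.IsRoot z.re := by
        have : aeval ((algebraMap ℝ ℂ) z.re) P = 0 := by
          show aeval ((z.re : ℝ) : ℂ) P = 0
          rw [← hzr]; exact hz'
        rw [aeval_algebraMap_apply] at this
        have h2 : (algebraMap ℝ ℂ) (aeval z.re P) = 0 := this
        have := (map_eq_zero_iff (algebraMap ℝ ℂ) (algebraMap ℝ ℂ).injective).mp h2
        simpa [IsRoot] using this
      obtain ⟨P₂, hP₂⟩ := dvd_iff_isRoot.mpr hroot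
      have hP₂0 : P₂ ≠ 0 := fun hh => h0 (by rw [hP₂, hh, mul_zero])
      have hXC : (X - C z.re : Polynomial ℝ) ≠ 0 := X_sub_C_ne_zero z.re
      have hdeg2 : P₂.natDegree = n - 1 := by
        have := natDegree_mul hXC hP₂0
        rw [← hP₂, hn, natDegree_X_sub_C] at this
        omega
      have hcard2 : Multiset.card P₂.roots = P₂.natDegree := by
        refine ih (n - 1) (by omega) P₂ hdeg2 hP₂0 ?_
        intro w hw
        refine h w ?_
        rw [hP₂, map_mul, hw, mul_zero]
      have hroots : P.roots = z.re ::ₘ P₂.roots := by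
        rw [hP₂, roots_mul (hP₂ ▸ h0), roots_X_sub_C]
        simp
      rw [hroots, Multiset.card_cons, hcard2, hdeg2, hn]
      omega

lemma prod_form (z : ℂ) (s : Multiset ℝ) :
    (s.map (fun t : ℝ => z - (t : ℂ))).prod =
      ((s.map (fun t : ℝ => ‖z - (t : ℂ)‖)).prod : ℝ) *
        Complex.exp (((s.map (fun t : ℝ => (z - (t : ℂ)).arg)).sum : ℝ) * Complex.I) := by
  induction s using Multiset.induction with
  | empty => simp
  | cons a s ih =>
    simp only [Multiset.map_cons, Multiset.prod_cons, Multiset.sum_cons, ih]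
    conv_lhs => rw [← Complex.norm_mul_exp_arg_mul_I (z - (a : ℂ))]
    push_cast
    rw [add_mul, Complex.exp_add]
    ring

lemma aeval_factored (Xp : Polynomial ℝ) (hs : Multiset.card Xp.roots = Xp.natDegree) (z : ℂ) :
    aeval z Xp = (Xp.leadingCoeff : ℂ) * (Xp.roots.map (fun t : ℝ => z - (t : ℂ))).prod := by
  have hsp : Splits Xp := splits_iff_card_roots.mpr hs
  conv_lhs => rw [hsp.eq_prod_roots]
  rw [map_mul, aeval_C, map_multiset_prod, Multiset.map_map]
  congr 2
  ext t
  simp [Complex.coe_algebraMap]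

lemma sroots_sorted (A : Polynomial ℝ) : (sroots A).Pairwise (· ≤ ·) := Multiset.pairwise_sort _ _

lemma sroots_length (A : Polynomial ℝ) : (sroots A).length = Multiset.card A.roots :=
  Multiset.length_sort _

lemma cntL_sroots (t : ℝ) (A : Polynomial ℝ) :
    cntL t (sroots A) = Multiset.countP (fun a => a ≤ t) A.roots := by
  unfold cntL sroots
  rw [← Multiset.coe_countP, Multiset.sort_eq]

lemma sum_sroots_arg (w : ℂ) (A : Polynomial ℝ) :
    (A.roots.map (fun t : ℝ => (w - (t : ℂ)).arg)).sum
      = ((sroots A).map (fun t : ℝ => (w - (t : ℂ)).arg)).sum := by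
  unfold sroots
  conv_lhs => rw [← Multiset.sort_eq A.roots (· ≤ ·)]
  rw [Multiset.map_coe, Multiset.sum_coe]

lemma HB (Xp Yp : Polynomial ℝ) (hX0 : Xp ≠ 0) (hY0 : Yp ≠ 0)
    (hXl : 0 < Xp.leadingCoeff) (hYl : 0 < Yp.leadingCoeff)
    (hXs : Multiset.card Xp.roots = Xp.natDegree) (hYs : Multiset.card Yp.roots = Yp.natDegree)
    (hshape : ((sroots Yp).length = (sroots Xp).length + 1 ∧ ILx (sroots Xp) (sroots Yp)) ∨
      ((sroots Yp).length = (sroots Xp).length ∧ ALx (sroots Xp) (sroots Yp)))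
    (l r : ℝ) (hl : 0 < l) (hr : 0 < r) :
    ∀ z : ℂ, aeval z (C l * Xp + C r * Yp) = 0 → z.im = 0 := by
  have key : ∀ w : ℂ, 0 < w.im → aeval w (C l * Xp + C r * Yp) ≠ 0 := by
    intro w hw heq
    have habs : ∀ (A : Polynomial ℝ),
        0 < (A.roots.map (fun t : ℝ => ‖w - (t : ℂ)‖)).prod := by
      intro A
      refine Multiset.prod_pos ?_
      intro a ha
      rcases Multiset.mem_map.mp ha with ⟨t, _, rfl⟩
      have hne : w - (t : ℂ) ≠ 0 := by
        intro hh
        have : (w - (t : ℂ)).im = w.im := im_sub_real w t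
        rw [hh] at this
        simp at this
        linarith [this ▸ hw]
      exact norm_pos_iff.mpr hne
    set f : ℝ → ℝ := fun t => (w - (t : ℂ)).arg with hf
    set SX := ((sroots Xp).map f).sum with hSX
    set SY := ((sroots Yp).map f).sum with hSY
    set RX := (Xp.roots.map (fun t : ℝ => ‖w - (t : ℂ)‖)).prod with hRX
    set RY := (Yp.roots.map (fun t : ℝ => ‖w - (t : ℂ)‖)).prod with hRY
    have hRXpos : 0 < RX := habs Xp
    have hRYpos : 0 < RY := habs Yp
    set Xw := aeval w Xp with hXwdef
    set Yw := aeval w Yp with hYwdef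
    have hXw : Xw = ((Xp.leadingCoeff * RX : ℝ) : ℂ) * Complex.exp ((SX : ℝ) * Complex.I) := by
      rw [hXwdef, aeval_factored Xp hXs w, prod_form, sum_sroots_arg]
      push_cast
      ring
    have hYw : Yw = ((Yp.leadingCoeff * RY : ℝ) : ℂ) * Complex.exp ((SY : ℝ) * Complex.I) := by
      rw [hYwdef, aeval_factored Yp hYs w, prod_form, sum_sroots_arg]
      push_cast
      ring
    have hXw0 : Xw ≠ 0 := by
      rw [hXw]
      apply mul_ne_zero
      · exact_mod_cast (mul_pos hXl hRXpos).ne'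
      · exact Complex.exp_ne_zero _
    -- heq gives r * Yw = -(l * Xw)
    rw [map_add, map_mul, map_mul, aeval_C, aeval_C] at heq
    have heq' : (r : ℂ) * Yw = -((l : ℂ) * Xw) := by
      have : (l : ℂ) * Xw + (r : ℂ) * Yw = 0 := by
        convert heq using 2 <;> simp [Complex.coe_algebraMap, hXwdef, hYwdef]
      linear_combination this
    set c := (starRingEnd ℂ) Xw * Yw with hc
    have hc1 : (r : ℂ) * c = -(l : ℂ) * ((Complex.normSq Xw : ℝ) : ℂ) := by
      calc (r : ℂ) * c = (starRingEnd ℂ) Xw * ((r : ℂ) * Yw) := by rw [hc]; ring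
        _ = (starRingEnd ℂ) Xw * (-((l : ℂ) * Xw)) := by rw [heq']
        _ = -(l : ℂ) * (Xw * (starRingEnd ℂ) Xw) := by ring
        _ = -(l : ℂ) * ((Complex.normSq Xw : ℝ) : ℂ) := by rw [Complex.mul_conj]
    have hnsq : 0 < Complex.normSq Xw := Complex.normSq_pos.mpr hXw0
    have him1 : r * c.im = 0 := by
      have h1 := congrArg Complex.im hc1
      simpa [Complex.mul_im] using h1
    have hcim : c.im = 0 := (mul_eq_zero.mp him1).resolve_left hr.ne'
    have hcre : c.re < 0 := by
      have h1 : r * c.re = -(l * Complex.normSq Xw) := by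
        have h2 := congrArg Complex.re hc1
        simpa [Complex.mul_re] using h2
      nlinarith
    -- now the polar form
    set K := Xp.leadingCoeff * RX * (Yp.leadingCoeff * RY) with hK
    have hKpos : 0 < K := mul_pos (mul_pos hXl hRXpos) (mul_pos hYl hRYpos)
    set θ := SY - SX with hθ
    have hcform : c = (K : ℂ) * Complex.exp ((θ : ℝ) * Complex.I) := by
      rw [hc, hXw, hYw, map_mul, Complex.conj_ofReal, ← Complex.exp_conj]
      have : (starRingEnd ℂ) ((SX : ℝ) * Complex.I) = -((SX : ℝ) * Complex.I) := by
        rw [map_mul, Complex.conj_ofReal, Complex.conj_I]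
        ring
      rw [this]
      have e1 : ((θ : ℝ) : ℂ) * Complex.I = -((SX : ℂ) * Complex.I) + (SY : ℂ) * Complex.I := by
        rw [hθ]; push_cast; ring
      rw [e1, Complex.exp_add, hK]
      push_cast
      ring
    have hcim2 : c.im = K * Real.sin θ := by
      rw [hcform]
      simp [Complex.mul_im, Complex.exp_ofReal_mul_I_im, Complex.exp_ofReal_mul_I_re]
    have hcre2 : c.re = K * Real.cos θ := by
      rw [hcform]
      simp [Complex.mul_re, Complex.exp_ofReal_mul_I_im, Complex.exp_ofReal_mul_I_re]
    -- θ bounds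
    have hmono : ∀ s u : ℝ, s ≤ u → f s ≤ f u := fun s u h => arg_mono hw h
    have hlo : ∀ s, 0 < f s := fun s => arg_pos_of_im_pos (by rw [im_sub_real]; exact hw)
    have hhi : ∀ s, f s < Real.pi := fun s => arg_lt_pi_of_im_pos (by rw [im_sub_real]; exact hw)
    have hθb : 0 ≤ θ ∧ θ < Real.pi := by
      rcases hshape with ⟨hlen, hIL⟩ | ⟨hlen, hAL⟩
      · exact theta_IL hmono hlo hhi hlen hIL
      · exact theta_AL hmono hlo hhi hlen hAL
    have hsin : Real.sin θ = 0 := by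
      have h1 : K * Real.sin θ = 0 := by rw [← hcim2]; exact hcim
      exact (mul_eq_zero.mp h1).resolve_left hKpos.ne'
    have hθ0 : θ = 0 := by
      by_contra hne
      have : 0 < θ := lt_of_le_of_ne hθb.1 (Ne.symm hne)
      have := Real.sin_pos_of_pos_of_lt_pi this hθb.2
      linarith
    rw [hθ0, Real.cos_zero, mul_one] at hcre2
    linarith
  intro z hz
  by_contra him
  rcases lt_trichotomy z.im 0 with h | h | h
  · have h1 : 0 < ((starRingEnd ℂ) z).im := by simp [Complex.conj_im]; linarith
    have h2 : aeval ((starRingEnd ℂ) z) (C l * Xp + C r * Yp) = 0 := by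
      rw [Polynomial.aeval_conj, hz, map_zero]
    exact key _ h1 h2
  · exact him h
  · exact key z h hz

lemma aeval_real (A : Polynomial ℝ) (x : ℝ) :
    aeval ((x : ℝ) : ℂ) A = ((eval x A : ℝ) : ℂ) := by
  rw [show ((x : ℝ) : ℂ) = algebraMap ℝ ℂ x from rfl, aeval_algebraMap_apply]
  simp

lemma realrooted_of_nonpos {A : Polynomial ℝ} (h : OnlyNonposZeros A) (h0 : A ≠ 0) :
    ∀ z : ℂ, aeval z A = 0 → z.im = 0 := by
  intro z hz
  exact ((h.resolve_left h0) z hz).1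

lemma roots_nonpos {A : Polynomial ℝ} (h : OnlyNonposZeros A) : ∀ x ∈ A.roots, x ≤ 0 := by
  intro x hx
  obtain ⟨hA0, hroot⟩ := Polynomial.mem_roots'.mp hx
  have h2 : aeval ((x : ℝ) : ℂ) A = 0 := by
    rw [aeval_real, hroot.eq_zero]
    simp
  have := ((h.resolve_left hA0) _ h2).2
  simpa using this

lemma main' (F P Q : Polynomial ℝ)
    (hF : F = 0 ∨ (F ≠ 0 ∧ ∀ z : ℂ, aeval z F = 0 → z.im = 0))
    (hPQ : Prec P Q) : Prec (F * P) (F * Q) := by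
  rcases hF with rfl | ⟨hF0, hFr⟩
  · left; rw [zero_mul]
  rcases hPQ with rfl | h
  · left; rw [mul_zero]
  rcases h with rfl | ⟨hRP, hRQ, hsh⟩
  · right; left; rw [mul_zero]
  rcases hRP with rfl | hRP
  · left; rw [mul_zero]
  rcases hRQ with rfl | hRQ
  · right; left; rw [mul_zero]
  have hPne : P ≠ 0 := by
    rintro rfl
    simpa using hRP Complex.I (by simp)
  have hQne : Q ≠ 0 := by
    rintro rfl
    simpa using hRQ Complex.I (by simp)
  have hFs : Multiset.card F.roots = F.natDegree := splits_of_real _ F rfl hF0 hFr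
  have hPs : Multiset.card P.roots = P.natDegree := splits_of_real _ P rfl hPne hRP
  have hQs : Multiset.card Q.roots = Q.natDegree := splits_of_real _ Q rfl hQne hRQ
  have hFP0 : F * P ≠ 0 := mul_ne_zero hF0 hPne
  have hFQ0 : F * Q ≠ 0 := mul_ne_zero hF0 hQne
  have hrFP : (F * P).roots = F.roots + P.roots := roots_mul hFP0
  have hrFQ : (F * Q).roots = F.roots + Q.roots := roots_mul hFQ0
  have hRFP : RealRooted (F * P) := by
    right; intro z hz
    rw [map_mul] at hz
    rcases mul_eq_zero.mp hz with h | h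
    exacts [hFr z h, hRP z h]
  have hRFQ : RealRooted (F * Q) := by
    right; intro z hz
    rw [map_mul] at hz
    rcases mul_eq_zero.mp hz with h | h
    exacts [hFr z h, hRQ z h]
  have lP : (sroots P).length = P.natDegree := (sroots_length P).trans hPs
  have lQ : (sroots Q).length = Q.natDegree := (sroots_length Q).trans hQs
  have lFP : (sroots (F * P)).length = F.natDegree + P.natDegree := by
    rw [sroots_length, hrFP, Multiset.card_add, hFs, hPs]
  have lFQ : (sroots (F * Q)).length = F.natDegree + Q.natDegree := by
    rw [sroots_length, hrFQ, Multiset.card_add, hFs, hQs]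
  have ndFP : (F * P).natDegree = F.natDegree + P.natDegree := natDegree_mul hF0 hPne
  have ndFQ : (F * Q).natDegree = F.natDegree + Q.natDegree := natDegree_mul hF0 hQne
  have cFP : ∀ t, cntL t (sroots (F * P)) =
      Multiset.countP (fun a => a ≤ t) F.roots + Multiset.countP (fun a => a ≤ t) P.roots := by
    intro t
    rw [cntL_sroots, hrFP, Multiset.countP_add]
  have cFQ : ∀ t, cntL t (sroots (F * Q)) =
      Multiset.countP (fun a => a ≤ t) F.roots + Multiset.countP (fun a => a ≤ t) Q.roots := by
    intro t
    rw [cntL_sroots, hrFQ, Multiset.countP_add]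
  refine Or.inr (Or.inr ⟨hRFP, hRFQ, ?_⟩)
  rcases hsh with ⟨hdeg, hidx⟩ | ⟨hdeg, h1, h2⟩
  · -- Interlaces P Q
    have hIL : ILx (sroots P) (sroots Q) := fun i hi => hidx i (lP ▸ hi)
    have hcnt := cnt_of_IL (sroots_sorted P) (sroots_sorted Q)
      (by rw [lP, lQ, hdeg]) hIL
    have hcnt2 : ∀ t, cntL t (sroots (F * P)) ≤ cntL t (sroots (F * Q)) ∧
        cntL t (sroots (F * Q)) ≤ cntL t (sroots (F * P)) + 1 := by
      intro t
      have := hcnt t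
      rw [cntL_sroots, cntL_sroots] at this
      rw [cFP, cFQ]
      omega
    have hIL2 : ILx (sroots (F * P)) (sroots (F * Q)) :=
      IL_of_cnt (sroots_sorted _) (sroots_sorted _) (by rw [lFP, lFQ, hdeg]; ring) hcnt2
    left
    constructor
    · rw [ndFP, ndFQ, hdeg]; ring
    · intro i hi
      exact hIL2 i (by rw [lFP, ← ndFP]; exact hi)
  · -- AltLeft P Q
    have hAL : ALx (sroots P) (sroots Q) :=
      ⟨fun i hi => h1 i (lP ▸ hi), fun i hi => h2 i (lP ▸ hi)⟩
    have hcnt := cnt_of_AL (sroots_sorted P) (sroots_sorted Q)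
      (by rw [lP, lQ, hdeg]) hAL
    have hcnt2 : ∀ t, cntL t (sroots (F * Q)) ≤ cntL t (sroots (F * P)) ∧
        cntL t (sroots (F * P)) ≤ cntL t (sroots (F * Q)) + 1 := by
      intro t
      have := hcnt t
      rw [cntL_sroots, cntL_sroots] at this
      rw [cFP, cFQ]
      omega
    have hAL2 : ALx (sroots (F * P)) (sroots (F * Q)) :=
      AL_of_cnt (sroots_sorted _) (sroots_sorted _) (by rw [lFP, lFQ, hdeg]) hcnt2
    right
    refine ⟨by rw [ndFP, ndFQ, hdeg], ?_, ?_⟩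
    · intro i hi
      exact hAL2.1 i (by rw [lFP, ← ndFP]; exact hi)
    · intro i hi
      exact hAL2.2 i (by rw [lFP, ← ndFP]; exact hi)

lemma F1_good (A B : Polynomial ℝ) (hA : Standard A) (hB : Standard B)
    (hA' : OnlyNonposZeros A) (hB' : OnlyNonposZeros B) (hAB : Prec A B)
    (l r : ℝ) (hl : 0 < l) (hr : 0 < r) :
    (C l * A + C r * B) = 0 ∨
      ((C l * A + C r * B) ≠ 0 ∧ ∀ z : ℂ, aeval z (C l * A + C r * B) = 0 → z.im = 0) := by
  by_cases hA0 : A = 0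
  · have hF : C l * A + C r * B = C r * B := by rw [hA0]; ring
    rw [hF]
    by_cases hB0 : B = 0
    · left; rw [hB0]; ring
    · right
      refine ⟨mul_ne_zero (C_ne_zero.mpr hr.ne') hB0, ?_⟩
      intro z hz
      rw [map_mul, aeval_C] at hz
      have : aeval z B = 0 := by
        rcases mul_eq_zero.mp hz with h | h
        · exact absurd h (by simp [Complex.coe_algebraMap, hr.ne'])
        · exact h
      exact realrooted_of_nonpos hB' hB0 z this
  · by_cases hB0 : B = 0
    · have hF : C l * A + C r * B = C l * A := by rw [hB0]; ring
      rw [hF]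
      right
      refine ⟨mul_ne_zero (C_ne_zero.mpr hl.ne') hA0, ?_⟩
      intro z hz
      rw [map_mul, aeval_C] at hz
      have : aeval z A = 0 := by
        rcases mul_eq_zero.mp hz with h | h
        · exact absurd h (by simp [Complex.coe_algebraMap, hl.ne'])
        · exact h
      exact realrooted_of_nonpos hA' hA0 z this
    · obtain ⟨hRA, hRB, hsh⟩ := (hAB.resolve_left hA0).resolve_left hB0
      have ha : 0 < A.leadingCoeff := hA.resolve_left hA0
      have hb : 0 < B.leadingCoeff := hB.resolve_left hB0
      have hAs : Multiset.card A.roots = A.natDegree :=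
        splits_of_real _ A rfl hA0 (hRA.resolve_left hA0)
      have hBs : Multiset.card B.roots = B.natDegree :=
        splits_of_real _ B rfl hB0 (hRB.resolve_left hB0)
      have lA : (sroots A).length = A.natDegree := (sroots_length A).trans hAs
      have lB : (sroots B).length = B.natDegree := (sroots_length B).trans hBs
      right
      rcases hsh with ⟨hdeg, hidx⟩ | ⟨hdeg, h1, h2⟩
      · constructor
        · intro h
          have hco : (C l * A + C r * B).coeff B.natDegree = r * B.leadingCoeff := by
            rw [coeff_add, coeff_C_mul, coeff_C_mul, coeff_natDegree,
              coeff_eq_zero_of_natDegree_lt (by omega)]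
            ring
          rw [h, coeff_zero] at hco
          nlinarith
        · exact HB A B hA0 hB0 ha hb hAs hBs
            (Or.inl ⟨by rw [lA, lB, hdeg], fun i hi => hidx i (lA ▸ hi)⟩) l r hl hr
      · constructor
        · intro h
          have hco : (C l * A + C r * B).coeff B.natDegree = l * A.leadingCoeff + r * B.leadingCoeff := by
            rw [coeff_add, coeff_C_mul, coeff_C_mul, coeff_natDegree, ← hdeg, coeff_natDegree]
          rw [h, coeff_zero] at hco
          nlinarith
        · exact HB A B hA0 hB0 ha hb hAs hBs
            (Or.inr ⟨by rw [lA, lB, hdeg], ⟨fun i hi => h1 i (lA ▸ hi), fun i hi => h2 i (lA ▸ hi)⟩⟩)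
            l r hl hr

lemma F2_good (A B : Polynomial ℝ) (hA : Standard A) (hB : Standard B)
    (hA' : OnlyNonposZeros A) (hB' : OnlyNonposZeros B) (hAB : Prec A B)
    (l r : ℝ) (hl : 0 < l) (hr : 0 < r) :
    (C l * B + C r * (X * A)) = 0 ∨
      ((C l * B + C r * (X * A)) ≠ 0 ∧ ∀ z : ℂ, aeval z (C l * B + C r * (X * A)) = 0 → z.im = 0) := by
  by_cases hA0 : A = 0
  · have hF : C l * B + C r * (X * A) = C l * B := by rw [hA0]; ring
    rw [hF]
    by_cases hB0 : B = 0
    · left; rw [hB0]; ring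
    · right
      refine ⟨mul_ne_zero (C_ne_zero.mpr hl.ne') hB0, ?_⟩
      intro z hz
      rw [map_mul, aeval_C] at hz
      have : aeval z B = 0 := by
        rcases mul_eq_zero.mp hz with h | h
        · exact absurd h (by simp [Complex.coe_algebraMap, hl.ne'])
        · exact h
      exact realrooted_of_nonpos hB' hB0 z this
  · have hXA0 : (X : Polynomial ℝ) * A ≠ 0 := mul_ne_zero X_ne_zero hA0
    by_cases hB0 : B = 0
    · have hF : C l * B + C r * (X * A) = C r * (X * A) := by rw [hB0]; ring
      rw [hF]
      right
      refine ⟨mul_ne_zero (C_ne_zero.mpr hr.ne') hXA0, ?_⟩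
      intro z hz
      rw [map_mul, aeval_C, map_mul, aeval_X] at hz
      rcases mul_eq_zero.mp hz with h | h
      · exact absurd h (by simp [Complex.coe_algebraMap, hr.ne'])
      · rcases mul_eq_zero.mp h with h | h
        · rw [h]; rfl
        · exact realrooted_of_nonpos hA' hA0 z h
    · obtain ⟨hRA, hRB, hsh⟩ := (hAB.resolve_left hA0).resolve_left hB0
      have ha : 0 < A.leadingCoeff := hA.resolve_left hA0
      have hb : 0 < B.leadingCoeff := hB.resolve_left hB0
      have hAs : Multiset.card A.roots = A.natDegree :=
        splits_of_real _ A rfl hA0 (hRA.resolve_left hA0)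
      have hBs : Multiset.card B.roots = B.natDegree :=
        splits_of_real _ B rfl hB0 (hRB.resolve_left hB0)
      have lA : (sroots A).length = A.natDegree := (sroots_length A).trans hAs
      have lB : (sroots B).length = B.natDegree := (sroots_length B).trans hBs
      have hleadXA : (X * A).leadingCoeff = A.leadingCoeff := by
        rw [leadingCoeff_mul, leadingCoeff_X, one_mul]
      have hndXA : (X * A).natDegree = A.natDegree + 1 := natDegree_X_mul hA0
      have hrXA : (X * A).roots = 0 ::ₘ A.roots := by
        rw [roots_mul hXA0, roots_X, Multiset.singleton_add]
      have hXAs : Multiset.card (X * A).roots = (X * A).natDegree := by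
        rw [hrXA, Multiset.card_cons, hAs, hndXA]
      have lXA : (sroots (X * A)).length = A.natDegree + 1 := by
        rw [sroots_length, hXAs, hndXA]
      have cXA : ∀ t, cntL t (sroots (X * A)) =
          Multiset.countP (fun a => a ≤ t) A.roots + (if (0:ℝ) ≤ t then 1 else 0) := by
        intro t
        rw [cntL_sroots, hrXA, Multiset.countP_cons]
      have cAfull : ∀ t : ℝ, 0 ≤ t → Multiset.countP (fun a => a ≤ t) A.roots = A.natDegree := by
        intro t ht
        rw [← hAs]
        exact Multiset.countP_eq_card.mpr (fun a haa => le_trans (roots_nonpos hA' a haa) ht)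
      have cBfull : ∀ t : ℝ, 0 ≤ t → Multiset.countP (fun a => a ≤ t) B.roots = B.natDegree := by
        intro t ht
        rw [← hBs]
        exact Multiset.countP_eq_card.mpr (fun a haa => le_trans (roots_nonpos hB' a haa) ht)
      have cAle : ∀ t : ℝ, Multiset.countP (fun a => a ≤ t) A.roots ≤ A.natDegree := by
        intro t; rw [← hAs]; exact Multiset.countP_le_card _ _
      have cBle : ∀ t : ℝ, Multiset.countP (fun a => a ≤ t) B.roots ≤ B.natDegree := by
        intro t; rw [← hBs]; exact Multiset.countP_le_card _ _
      right
      rcases hsh with ⟨hdeg, hidx⟩ | ⟨hdeg, h1, h2⟩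
      · -- Interlaces A B ; target shape: AL (B, X*A), equal lengths
        have hIL : ILx (sroots A) (sroots B) := fun i hi => hidx i (lA ▸ hi)
        have hcnt := cnt_of_IL (sroots_sorted A) (sroots_sorted B) (by rw [lA, lB, hdeg]) hIL
        have hcnt2 : ∀ t, cntL t (sroots (X * A)) ≤ cntL t (sroots B) ∧
            cntL t (sroots B) ≤ cntL t (sroots (X * A)) + 1 := by
          intro t
          have h3 := hcnt t
          rw [cntL_sroots, cntL_sroots] at h3
          rw [cXA, cntL_sroots]
          by_cases ht : (0:ℝ) ≤ t
          · rw [if_pos ht, cAfull t ht, cBfull t ht, hdeg]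
            omega
          · rw [if_neg ht]
            omega
        have hAL2 : ALx (sroots B) (sroots (X * A)) :=
          AL_of_cnt (sroots_sorted B) (sroots_sorted _) (by rw [lXA, lB, hdeg]) hcnt2
        constructor
        · intro h
          have hco : (C l * B + C r * (X * A)).coeff (X * A).natDegree
              = l * B.leadingCoeff + r * A.leadingCoeff := by
            have endXA : (X * A).natDegree = B.natDegree := by rw [hndXA, hdeg]
            rw [coeff_add, coeff_C_mul, coeff_C_mul, coeff_natDegree, hleadXA, endXA,
              coeff_natDegree]
          rw [h, coeff_zero] at hco
          nlinarith
        · exact HB B (X * A) hB0 hXA0 hb (hleadXA ▸ ha) hBs hXAs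
            (Or.inr ⟨by rw [lXA, lB, hdeg], hAL2⟩) l r hl hr
      · -- AltLeft A B ; target shape: IL (B, X*A)
        have hAL : ALx (sroots A) (sroots B) :=
          ⟨fun i hi => h1 i (lA ▸ hi), fun i hi => h2 i (lA ▸ hi)⟩
        have hcnt := cnt_of_AL (sroots_sorted A) (sroots_sorted B) (by rw [lA, lB, hdeg]) hAL
        have hcnt2 : ∀ t, cntL t (sroots B) ≤ cntL t (sroots (X * A)) ∧
            cntL t (sroots (X * A)) ≤ cntL t (sroots B) + 1 := by
          intro t
          have h3 := hcnt t
          rw [cntL_sroots, cntL_sroots] at h3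
          rw [cXA, cntL_sroots]
          by_cases ht : (0:ℝ) ≤ t
          · rw [if_pos ht, cAfull t ht, cBfull t ht, hdeg]
            omega
          · rw [if_neg ht]
            omega
        have hIL2 : ILx (sroots B) (sroots (X * A)) :=
          IL_of_cnt (sroots_sorted B) (sroots_sorted _) (by rw [lXA, lB, ← hdeg]) hcnt2
        constructor
        · intro h
          have hco : (C l * B + C r * (X * A)).coeff (X * A).natDegree
              = r * A.leadingCoeff := by
            rw [coeff_add, coeff_C_mul, coeff_C_mul, coeff_natDegree, hleadXA,
              coeff_eq_zero_of_natDegree_lt (by rw [hndXA, ← hdeg]; omega)]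
            ring
          rw [h, coeff_zero] at hco
          nlinarith
        · exact HB B (X * A) hB0 hXA0 hb (hleadXA ▸ ha) hBs hXAs
            (Or.inl ⟨by rw [lXA, lB, ← hdeg], hIL2⟩) l r hl hr


/-- Lemma 4.2: if `A ≺ B` and `P ≺ Q` are pairs of standard polynomials with only real
nonpositive zeros, then `(AP, BP, AQ, BQ)` is an interpolatory square: for all `λ, ρ > 0`,
`λAP + ρBP ≺ λAQ + ρBQ` and `λBP + ρxAP ≺ λBQ + ρxAQ`. -/
theorem stmt12 (A B P Q : Polynomial ℝ)
    (hA : Standard A) (hB : Standard B) (hP : Standard P) (hQ : Standard Q)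
    (hA' : OnlyNonposZeros A) (hB' : OnlyNonposZeros B)
    (hP' : OnlyNonposZeros P) (hQ' : OnlyNonposZeros Q)
    (hAB : Prec A B) (hPQ : Prec P Q) :
    ∀ l r : ℝ, 0 < l → 0 < r →
      Prec (C l * (A * P) + C r * (B * P)) (C l * (A * Q) + C r * (B * Q)) ∧
        Prec (C l * (B * P) + C r * (X * (A * P))) (C l * (B * Q) + C r * (X * (A * Q))) := by
  intro l r hl hr
  constructor
  · have e1 : C l * (A * P) + C r * (B * P) = (C l * A + C r * B) * P := by ring
    have e2 : C l * (A * Q) + C r * (B * Q) = (C l * A + C r * B) * Q := by ring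
    rw [e1, e2]
    exact main' _ _ _ (F1_good A B hA hB hA' hB' hAB l r hl hr) hPQ
  · have e1 : C l * (B * P) + C r * (X * (A * P)) = (C l * B + C r * (X * A)) * P := by ring
    have e2 : C l * (B * Q) + C r * (X * (A * Q)) = (C l * B + C r * (X * A)) * Q := by ring
    rw [e1, e2]
    exact main' _ _ _ (F2_good A B hA hB hA' hB' hAB l r hl hr) hPQ
end
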